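/- For every integer n ≥ 4 one has ∑_{p | n, p prime} (log p)/p ≤ 5.25 · log(log n), where the sum runs over the distinct prime divisors of n. -/

import Mathlib

open Real Finset


lemma my_sum_log_le (n : ℕ) (hn : 1 ≤ n) :
    ∑ p ∈ n.primeFactors, Real.log p ≤ Real.log n := by
  have h0 : ∀ p ∈ n.primeFactors, (p : ℝ) ≠ 0 := by
    intro p hp
    exact_mod_cast (Nat.prime_of_mem_primeFactors hp).ne_zero
  rw [← Real.log_prod h0, ← Nat.cast_prod]
  have hprod : ((∏ p ∈ n.primeFactors, p : ℕ) : ℝ) ≤ (n:ℝ) := by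
    exact_mod_cast Nat.le_of_dvd (by omega) (Nat.prod_primeFactors_dvd n)
  apply Real.log_le_log _ hprod
  have : 0 < ∏ p ∈ n.primeFactors, p :=
    Finset.prod_pos fun p hp => (Nat.prime_of_mem_primeFactors hp).pos
  exact_mod_cast this

lemma my_choose_le (m : ℕ) : Nat.choose (2*m) m ≤ 4 ^ m := by
  calc Nat.choose (2*m) m ≤ ∑ i ∈ range (2*m+1), Nat.choose (2*m) i :=
        Finset.single_le_sum (fun i _ => Nat.zero_le _) (by simp; omega)
    _ = 2 ^ (2*m) := Nat.sum_range_choose (2*m)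
    _ = 4 ^ m := by rw [pow_mul]; norm_num


lemma my_block_dvd (K : ℕ) :
    ∏ p ∈ (Finset.Ico (2^K+1) (2^(K+1)+1)).filter Nat.Prime, p ∣
      Nat.choose (2^K + 2^K) (2^K) := by
  apply Finset.prod_primes_dvd
  · intro p hp
    simp only [Finset.mem_filter] at hp
    exact hp.2.prime
  · intro p hp
    simp only [Finset.mem_filter, Finset.mem_Ico] at hp
    apply Nat.Prime.dvd_choose_add hp.2
    · omega
    · omega
    · have : 2^(K+1) = 2^K + 2^K := by ring
      omega

lemma my_block_log_sum (K : ℕ) :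
    ∑ p ∈ (Finset.Ico (2^K+1) (2^(K+1)+1)).filter Nat.Prime, Real.log p
      ≤ 2^K * (2 * Real.log 2) := by
  have hdvd := my_block_dvd K
  have hle : ∏ p ∈ (Finset.Ico (2^K+1) (2^(K+1)+1)).filter Nat.Prime, p ≤ 4 ^ (2^K) := by
    calc ∏ p ∈ (Finset.Ico (2^K+1) (2^(K+1)+1)).filter Nat.Prime, p
        ≤ Nat.choose (2^K + 2^K) (2^K) :=
          Nat.le_of_dvd (Nat.choose_pos (Nat.le_add_right _ _)) hdvd
      _ = Nat.choose (2 * 2^K) (2^K) := by ring_nf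
      _ ≤ 4 ^ (2^K) := by
          calc Nat.choose (2*2^K) (2^K) ≤ ∑ i ∈ range (2*2^K+1), Nat.choose (2*2^K) i :=
                Finset.single_le_sum (fun i _ => Nat.zero_le _) (by simp)
            _ = 2 ^ (2*2^K) := Nat.sum_range_choose _
            _ = 4 ^ (2^K) := by rw [pow_mul]; norm_num
  have h0 : ∀ p ∈ (Finset.Ico (2^K+1) (2^(K+1)+1)).filter Nat.Prime, (p : ℝ) ≠ 0 := by
    intro p hp
    simp only [Finset.mem_filter] at hp
    exact_mod_cast hp.2.ne_zero
  rw [← Real.log_prod h0, ← Nat.cast_prod]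
  calc Real.log ((∏ p ∈ (Finset.Ico (2^K+1) (2^(K+1)+1)).filter Nat.Prime, p : ℕ) : ℝ)
      ≤ Real.log ((4:ℝ) ^ (2^K)) := by
        have hpos : 0 < ∏ p ∈ (Finset.Ico (2^K+1) (2^(K+1)+1)).filter Nat.Prime, p :=
          Finset.prod_pos fun p hp => ((Finset.mem_filter.1 hp).2).pos
        apply Real.log_le_log (by exact_mod_cast hpos)
        exact_mod_cast hle
    _ = 2^K * (2 * Real.log 2) := by
        rw [Real.log_pow]
        have : (4:ℝ) = 2^2 := by norm_num
        rw [this, Real.log_pow]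
        push_cast
        ring


lemma my_mertens (K : ℕ) :
    ∑ p ∈ (Finset.range (2^K+1)).filter Nat.Prime, Real.log p / p
      ≤ K * (2 * Real.log 2) := by
  induction K with
  | zero =>
    have : (Finset.range (2^0+1)).filter Nat.Prime = ∅ := by decide
    rw [show (2:ℕ)^0+1 = 2 from rfl] at this
    simp [this]
  | succ K ih =>
    have hsplit : (Finset.range (2^(K+1)+1)).filter Nat.Prime
        = (Finset.range (2^K+1)).filter Nat.Prime
          ∪ (Finset.Ico (2^K+1) (2^(K+1)+1)).filter Nat.Prime := by
      rw [← Finset.filter_union, Finset.range_eq_Ico, Finset.range_eq_Ico,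
        Finset.Ico_union_Ico_eq_Ico (Nat.zero_le _)
          (by have : 2^K ≤ 2^(K+1) := Nat.pow_le_pow_right (by norm_num) (by omega); omega),
        ← Finset.range_eq_Ico]
    have hdisj : Disjoint ((Finset.range (2^K+1)).filter Nat.Prime)
        ((Finset.Ico (2^K+1) (2^(K+1)+1)).filter Nat.Prime) := by
      apply Finset.disjoint_filter_filter
      rw [Finset.range_eq_Ico]
      exact Finset.Ico_disjoint_Ico_consecutive 0 _ _
    rw [hsplit, Finset.sum_union hdisj]
    have hblock : ∑ p ∈ (Finset.Ico (2^K+1) (2^(K+1)+1)).filter Nat.Prime, Real.log p / p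
        ≤ 2 * Real.log 2 := by
      have h1 : ∑ p ∈ (Finset.Ico (2^K+1) (2^(K+1)+1)).filter Nat.Prime, Real.log p / p
          ≤ ∑ p ∈ (Finset.Ico (2^K+1) (2^(K+1)+1)).filter Nat.Prime,
              Real.log p / (2^K : ℝ) := by
        apply Finset.sum_le_sum
        intro p hp
        simp only [Finset.mem_filter, Finset.mem_Ico] at hp
        have hp2 : ((2:ℝ)^K) ≤ (p:ℝ) := by exact_mod_cast (by omega : 2^K ≤ p)
        have hlog : 0 ≤ Real.log p := Real.log_nonneg (by exact_mod_cast hp.2.one_lt.le)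
        gcongr
      rw [← Finset.sum_div] at h1
      calc ∑ p ∈ (Finset.Ico (2^K+1) (2^(K+1)+1)).filter Nat.Prime, Real.log p / p
          ≤ (∑ p ∈ (Finset.Ico (2^K+1) (2^(K+1)+1)).filter Nat.Prime, Real.log p) / 2^K := h1
        _ ≤ (2^K * (2 * Real.log 2)) / 2^K := by
            gcongr
            exact my_block_log_sum K
        _ = 2 * Real.log 2 := by field_simp
    push_cast
    nlinarith [Real.log_pos (by norm_num : (1:ℝ) < 2), ih, hblock]


/-- For every integer `n ≥ 4`, the sum of `(log p)/p` over the distinct prime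
divisors `p` of `n` is at most `5.25 · log log n`. -/
theorem sum_log_p_div_p_le (n : ℕ) (hn : 4 ≤ n) :
    ∑ p ∈ n.primeFactors, Real.log p / p ≤ 5.25 * Real.log (Real.log n) := by
  have l2lo : (0.6931471803:ℝ) < Real.log 2 := Real.log_two_gt_d9
  have l2hi : Real.log 2 < 0.6931471808 := Real.log_two_lt_d9
  have hlog4 : Real.log 4 = 2 * Real.log 2 := by
    rw [show (4:ℝ) = 2^2 by norm_num, Real.log_pow]; push_cast; ring
  have hn1 : (1:ℕ) ≤ n := by omega
  have hlogn4 : Real.log 4 ≤ Real.log n := by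
    apply Real.log_le_log (by norm_num)
    exact_mod_cast hn
  have h2l2pos : (0:ℝ) < 2 * Real.log 2 := by linarith
  rcases lt_or_ge n 16 with hsmall | hbig
  · -- small case : 4 ≤ n ≤ 15
    have hsum : ∑ p ∈ n.primeFactors, Real.log p / p
        ≤ (∑ p ∈ n.primeFactors, Real.log p) / 2 := by
      rw [Finset.sum_div]
      apply Finset.sum_le_sum
      intro p hp
      have hp2 : (2:ℝ) ≤ (p:ℝ) :=
        by exact_mod_cast (Nat.prime_of_mem_primeFactors hp).two_le
      have hlp : 0 ≤ Real.log p := Real.log_nonneg (by linarith)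
      gcongr
    have hlogn16 : Real.log n ≤ 4 * Real.log 2 := by
      have : Real.log n ≤ Real.log 16 := by
        apply Real.log_le_log (by positivity)
        exact_mod_cast hsmall.le
      rwa [show (16:ℝ) = 2^4 by norm_num, Real.log_pow, Nat.cast_ofNat] at this
    -- log (2 * log 2) ≥ (6/13) * log 2
    have hkey : (6:ℝ)/13 * Real.log 2 ≤ Real.log (2 * Real.log 2) := by
      have hpow : (2:ℝ)^6 ≤ (2 * Real.log 2)^13 := by
        calc (2:ℝ)^6 ≤ (1.3862943606:ℝ)^13 := by norm_num
          _ ≤ (2 * Real.log 2)^13 := by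
              apply pow_le_pow_left₀ (by norm_num)
              linarith
      have := Real.log_le_log (by positivity) hpow
      rw [Real.log_pow, Real.log_pow] at this
      push_cast at this
      linarith
    have hmono : Real.log (2 * Real.log 2) ≤ Real.log (Real.log n) := by
      apply Real.log_le_log h2l2pos
      linarith [hlogn4, hlog4]
    have hS := my_sum_log_le n hn1
    calc ∑ p ∈ n.primeFactors, Real.log p / p
        ≤ (∑ p ∈ n.primeFactors, Real.log p) / 2 := hsum
      _ ≤ Real.log n / 2 := by linarith
      _ ≤ 2 * Real.log 2 := by linarith
      _ ≤ 5.25 * ((6:ℝ)/13 * Real.log 2) := by nlinarith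
      _ ≤ 5.25 * Real.log (Real.log n) := by nlinarith [hkey, hmono]
  · -- main case : n ≥ 16
    set L := Real.log n with hL
    have hL16 : 4 * Real.log 2 ≤ L := by
      have : Real.log 16 ≤ Real.log n := by
        apply Real.log_le_log (by norm_num)
        exact_mod_cast hbig
      rwa [show (16:ℝ) = 2^4 by norm_num, Real.log_pow, Nat.cast_ofNat] at this
    have hLpos : (0:ℝ) < L := by linarith
    have hlogLkey : (4:ℝ)/3 * Real.log 2 ≤ Real.log L := by
      have hpow : (2:ℝ)^4 ≤ (4 * Real.log 2)^3 := by
        calc (2:ℝ)^4 ≤ (2.7725887212:ℝ)^3 := by norm_num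
          _ ≤ (4 * Real.log 2)^3 := by
              apply pow_le_pow_left₀ (by norm_num)
              linarith
      have h1 := Real.log_le_log (by positivity) hpow
      have h2 : Real.log (4 * Real.log 2) ≤ Real.log L :=
        Real.log_le_log (by positivity) hL16
      rw [Real.log_pow, Real.log_pow] at h1
      push_cast at h1
      linarith
    have hlogLpos : (0:ℝ) < Real.log L := by linarith
    set M := ⌊L⌋₊ with hM
    have hM2 : 2 ≤ M := by
      apply Nat.le_floor
      push_cast
      linarith
    set K := Nat.clog 2 M with hK
    have hMK : M ≤ 2^K := Nat.le_pow_clog (by norm_num) M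
    have hK1 : 1 ≤ K := by
      by_contra h
      push_neg at h
      interval_cases K
      · simp at hMK; omega
    -- bound on K
    have hKbound : (K:ℝ) * (2 * Real.log 2) ≤ 2 * Real.log L + 2 * Real.log 2 := by
      have hlt : 2 ^ (K - 1) < M := Nat.pow_pred_clog_lt_self (by norm_num) (by omega)
      have hlt' : ((2:ℝ)) ^ (K-1) < (M:ℝ) := by exact_mod_cast hlt
      have hML : (M:ℝ) ≤ L := Nat.floor_le hLpos.le
      have h1 : Real.log ((2:ℝ)^(K-1)) ≤ Real.log L := by
        apply Real.log_le_log (by positivity)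
        linarith
      rw [Real.log_pow] at h1
      have hKc : ((K-1 : ℕ):ℝ) = (K:ℝ) - 1 := by
        push_cast [Nat.cast_sub hK1]
        ring
      rw [hKc] at h1
      nlinarith
    -- split the sum
    rw [← Finset.sum_filter_add_sum_filter_not n.primeFactors (fun p : ℕ => (p:ℝ) ≤ L)]
    have hhead : ∑ p ∈ n.primeFactors.filter (fun p : ℕ => (p:ℝ) ≤ L), Real.log p / p
        ≤ (K:ℝ) * (2 * Real.log 2) := by
      refine le_trans ?_ (my_mertens K)
      apply Finset.sum_le_sum_of_subset_of_nonneg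
      · intro p hp
        simp only [Finset.mem_filter] at hp ⊢
        refine ⟨Finset.mem_range.2 ?_, Nat.prime_of_mem_primeFactors hp.1⟩
        have hpM : p ≤ M := Nat.le_floor hp.2
        omega
      · intro p _ _
        have : (1:ℝ) ≤ p → 0 ≤ Real.log p / p := fun h =>
          div_nonneg (Real.log_nonneg h) (by linarith)
        rcases Nat.eq_zero_or_pos p with h0 | h1
        · simp [h0]
        · exact this (by exact_mod_cast h1)
    have htail : ∑ p ∈ n.primeFactors.filter (fun p : ℕ => ¬ (p:ℝ) ≤ L), Real.log p / p
        ≤ 1 := by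
      set B := n.primeFactors.filter (fun p : ℕ => ¬ (p:ℝ) ≤ L) with hB
      have hexpL : Real.exp 1 ≤ L := by
        have := Real.exp_one_lt_d9
        linarith
      have hterm : ∀ p ∈ B, Real.log p / p ≤ Real.log L / L := by
        intro p hp
        simp only [hB, Finset.mem_filter, not_le] at hp
        exact Real.log_div_self_antitoneOn hexpL (le_trans hexpL hp.2.le) hp.2.le
      have hcard : (B.card : ℝ) * Real.log L ≤ L := by
        have h1 : (B.card : ℝ) * Real.log L ≤ ∑ p ∈ B, Real.log (p:ℝ) := by
          rw [← nsmul_eq_mul]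
          apply Finset.card_nsmul_le_sum
          intro p hp
          simp only [hB, Finset.mem_filter, not_le] at hp
          exact Real.log_le_log hLpos hp.2.le
        have h2 : ∑ p ∈ B, Real.log p ≤ ∑ p ∈ n.primeFactors, Real.log p := by
          apply Finset.sum_le_sum_of_subset_of_nonneg (Finset.filter_subset _ _)
          intro p hp _
          exact Real.log_nonneg (by exact_mod_cast (Nat.prime_of_mem_primeFactors hp).one_le)
        linarith [my_sum_log_le n hn1]
      calc ∑ p ∈ B, Real.log p / p ≤ ∑ p ∈ B, Real.log L / L :=
            Finset.sum_le_sum hterm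
        _ = (B.card : ℝ) * (Real.log L / L) := by
            rw [Finset.sum_const, nsmul_eq_mul]
        _ = ((B.card : ℝ) * Real.log L) / L := by ring
        _ ≤ L / L := by gcongr
        _ = 1 := div_self hLpos.ne'
    have hfinal : (K:ℝ) * (2 * Real.log 2) + 1 ≤ 5.25 * Real.log L := by
      nlinarith [hKbound, hlogLkey, l2lo, l2hi]
    linarith
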